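/- arXiv:0809.0078 — 2 statements merged into one kernel-verified Lean document; each statement's English description precedes it below -/
import Mathlib

section
/- Let τ : S_n(ℂ) → S_n(ℂ) be a bi-quantum channel with n ≥ 2. Then for every unit vector x ∈ ℂ^n, ∑_{i=1}^n λ_i(τ(x x^*))² = ‖τ(x x^*)‖_F² ≤ σ_2(τ)² + (1 − σ_2(τ)²)/n. -/
open scoped ComplexOrder
open Matrix Kronecker

/-- Frobenius norm of a complex matrix: `√(tr (X Xᴴ))`. -/
noncomputable def frobNorm {n m : Type*} [Fintype n] [Fintype m]
    (X : Matrix n m ℂ) : ℝ :=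
  Real.sqrt ((X * Xᴴ).trace.re)

/-- Operator norm `σ₁(τ) = ‖τ‖` of a map between spaces of Hermitian matrices,
with respect to the Frobenius norm. -/
noncomputable def opNorm {n m : Type*} [Fintype n] [Fintype m]
    (τ : Matrix n n ℂ → Matrix m m ℂ) : ℝ :=
  sSup {c : ℝ | ∃ X : Matrix n n ℂ, X.IsHermitian ∧ frobNorm X ≤ 1 ∧ c = frobNorm (τ X)}

/-- The second singular value of a map between spaces of Hermitian matrices, via the
Courant–Fischer min-max characterization: the infimum over nonzero Hermitian `U` of the
norm of `τ` restricted to the orthogonal complement of `U`. -/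
noncomputable def sigma2 {n m : Type*} [Fintype n] [Fintype m]
    (τ : Matrix n n ℂ → Matrix m m ℂ) : ℝ :=
  sInf {c : ℝ | ∃ U : Matrix n n ℂ, U.IsHermitian ∧ U ≠ 0 ∧
    c = sSup {d : ℝ | ∃ X : Matrix n n ℂ, X.IsHermitian ∧ frobNorm X ≤ 1 ∧
      (U * X).trace.re = 0 ∧ d = frobNorm (τ X)}}

/-- Largest eigenvalue `λ₁` of a Hermitian matrix (junk value `0` otherwise). -/
noncomputable def lambdaMax {n : Type*} [Fintype n] [DecidableEq n]
    (Y : Matrix n n ℂ) : ℝ :=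
  if hY : Y.IsHermitian then ⨆ i, hY.eigenvalues i else 0

/-- von Neumann entropy `H(Y) = -∑ λᵢ log λᵢ` of a Hermitian matrix
(junk value `0` otherwise); note `Real.log 0 = 0`. -/
noncomputable def entropy {n : Type*} [Fintype n] [DecidableEq n]
    (Y : Matrix n n ℂ) : ℝ :=
  if hY : Y.IsHermitian then -∑ i, hY.eigenvalues i * Real.log (hY.eigenvalues i) else 0

/-- Minimum output entropy of a channel: the infimum of `H(τ X)` over density matrices `X`. -/
noncomputable def minEntropy {n m : Type*} [Fintype n] [DecidableEq n] [Fintype m] [DecidableEq m]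
    (τ : Matrix n n ℂ → Matrix m m ℂ) : ℝ :=
  sInf {h : ℝ | ∃ X : Matrix n n ℂ, X.PosSemidef ∧ X.trace = 1 ∧ h = entropy (τ X)}

/-- Eigenvalues of a Hermitian matrix arranged in decreasing order:
`eigsDesc Y 0 = λ₁ ≥ eigsDesc Y 1 = λ₂ ≥ …` (junk value `0` if not Hermitian). -/
noncomputable def eigsDesc {n : ℕ} (Y : Matrix (Fin n) (Fin n) ℂ) : Fin n → ℝ :=
  if hY : Y.IsHermitian then fun i => hY.eigenvalues (Tuple.sort hY.eigenvalues i.rev)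
  else fun _ => 0

/-- The sum `λ₁ + ⋯ + λ_k` of the `k` largest eigenvalues of a Hermitian matrix. -/
noncomputable def sumTopEigs {n : ℕ} (k : ℕ) (Y : Matrix (Fin n) (Fin n) ℂ) : ℝ :=
  ∑ i : Fin n, if (i : ℕ) < k then eigsDesc Y i else 0

lemma trace_sq_re {n : ℕ} (X : Matrix (Fin n) (Fin n) ℂ) :
    ((X * Xᴴ).trace).re = ∑ i, ∑ j, Complex.normSq (X i j) := by
  simp [Matrix.trace, Matrix.mul_apply, Matrix.conjTranspose_apply, Matrix.diag,
    Complex.mul_conj, Complex.re_sum]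

lemma trace_sq_re_nonneg {n : ℕ} (X : Matrix (Fin n) (Fin n) ℂ) :
    0 ≤ ((X * Xᴴ).trace).re := by
  rw [trace_sq_re]
  exact Finset.sum_nonneg fun i _ => Finset.sum_nonneg fun j _ => Complex.normSq_nonneg _

lemma trace_conj_sq_re_nonneg {n : ℕ} (X : Matrix (Fin n) (Fin n) ℂ) :
    0 ≤ ((Xᴴ * X).trace).re := by
  have := trace_sq_re_nonneg Xᴴ
  simpa using this

lemma re_trace_le {n : ℕ} (P Q : Matrix (Fin n) (Fin n) ℂ) :
    2 * ((Pᴴ * Q).trace).re ≤ ((Pᴴ * P).trace).re + ((Qᴴ * Q).trace).re := by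
  have h0 : 0 ≤ (((P - Q)ᴴ * (P - Q)).trace).re := trace_conj_sq_re_nonneg _
  have hexp : ((P - Q)ᴴ * (P - Q)) = Pᴴ * P - Pᴴ * Q - Qᴴ * P + Qᴴ * Q := by
    simp [Matrix.conjTranspose_sub, Matrix.sub_mul, Matrix.mul_sub]; abel
  have hQP : ((Qᴴ * P).trace).re = ((Pᴴ * Q).trace).re := by
    have : Qᴴ * P = (Pᴴ * Q)ᴴ := by simp [Matrix.conjTranspose_mul]
    rw [this, Matrix.trace_conjTranspose]
    simp [Complex.star_def]
  rw [hexp] at h0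
  simp only [Matrix.trace_add, Matrix.trace_sub, Complex.add_re, Complex.sub_re, hQP] at h0
  linarith

lemma sum_trace_mid {n l : ℕ} (M N : Matrix (Fin n) (Fin n) ℂ)
    (B : Fin l → Matrix (Fin n) (Fin n) ℂ) :
    ∑ j, (M * B j * N).trace = (M * (∑ j, B j) * N).trace := by
  rw [Finset.mul_sum, Finset.sum_mul, Matrix.trace_sum]

lemma contraction {n l : ℕ} (A : Fin l → Matrix (Fin n) (Fin n) ℂ)
    (hA : ∑ i, (A i)ᴴ * A i = 1) (hA' : ∑ i, A i * (A i)ᴴ = 1)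
    (X : Matrix (Fin n) (Fin n) ℂ) (hX : X.IsHermitian) :
    (((∑ i, A i * X * (A i)ᴴ) * (∑ i, A i * X * (A i)ᴴ)).trace).re
      ≤ ((X * X).trace).re := by
  have hXe : Xᴴ = X := hX
  set P : Fin l → Fin l → Matrix (Fin n) (Fin n) ℂ :=
    fun i j => (A j)ᴴ * A i * X with hP
  set Q : Fin l → Fin l → Matrix (Fin n) (Fin n) ℂ :=
    fun i j => X * ((A j)ᴴ * A i) with hQ
  have hterm : ∀ i j, ((A i * X * (A i)ᴴ) * (A j * X * (A j)ᴴ)).trace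
      = ((P i j)ᴴ * Q i j).trace := by
    intro i j
    have h1 : (A i * X * (A i)ᴴ) * (A j * X * (A j)ᴴ)
        = A i * (X * ((A i)ᴴ * (A j * (X * (A j)ᴴ)))) := by
      simp [Matrix.mul_assoc]
    rw [h1, Matrix.trace_mul_comm]
    congr 1
    simp [hP, hQ, Matrix.conjTranspose_mul, hXe, Matrix.mul_assoc]
  have hsum : ((∑ i, A i * X * (A i)ᴴ) * (∑ i, A i * X * (A i)ᴴ)).trace
      = ∑ i, ∑ j, ((P i j)ᴴ * Q i j).trace := by
    rw [Finset.sum_mul]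
    rw [Matrix.trace_sum]
    refine Finset.sum_congr rfl fun i _ => ?_
    rw [Finset.mul_sum, Matrix.trace_sum]
    exact Finset.sum_congr rfl fun j _ => hterm i j
  have hPP : ∑ i, ∑ j, (((P i j)ᴴ * P i j).trace).re = ((X * X).trace).re := by
    have h1 : ∀ i j, ((P i j)ᴴ * P i j).trace
        = ((X * (A i)ᴴ) * (A j * (A j)ᴴ) * (A i * X)).trace := by
      intro i j
      congr 1
      simp [hP, Matrix.conjTranspose_mul, hXe, Matrix.mul_assoc]
    have h2 : ∀ i, ∑ j, ((P i j)ᴴ * P i j).trace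
        = ((X * ((A i)ᴴ * A i)) * X).trace := by
      intro i
      rw [Finset.sum_congr rfl fun j _ => h1 i j, sum_trace_mid, hA']
      congr 1
      simp [Matrix.mul_assoc]
    have h3 : ∑ i, ∑ j, ((P i j)ᴴ * P i j).trace = ((X * X).trace) := by
      rw [Finset.sum_congr rfl fun i _ => h2 i]
      rw [sum_trace_mid X X (fun i => (A i)ᴴ * A i), hA, Matrix.mul_one]
    simp only [← Complex.re_sum]
    rw [h3]
  have hQQ : ∑ i, ∑ j, (((Q i j)ᴴ * Q i j).trace).re = ((X * X).trace).re := by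
    have h1 : ∀ i j, ((Q i j)ᴴ * Q i j).trace
        = ((A j * (X * X) * (A j)ᴴ) * (A i * (A i)ᴴ)).trace := by
      intro i j
      have e1 : (Q i j)ᴴ * Q i j = (A i)ᴴ * (A j * (X * (X * ((A j)ᴴ * A i)))) := by
        simp [hQ, Matrix.conjTranspose_mul, hXe, Matrix.mul_assoc]
      rw [e1, Matrix.trace_mul_comm]
      congr 1
      simp [Matrix.mul_assoc]
    have h2 : ∀ j, ∑ i, ((Q i j)ᴴ * Q i j).trace
        = ((A j * (X * X) * (A j)ᴴ)).trace := by
      intro j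
      rw [Finset.sum_congr rfl fun i _ => h1 i j]
      have := sum_trace_mid (A j * (X * X) * (A j)ᴴ) 1 (fun i => A i * (A i)ᴴ)
      simp only [Matrix.mul_one] at this
      rw [this, hA', Matrix.mul_one]
    have h3 : ∑ i, ∑ j, ((Q i j)ᴴ * Q i j).trace = ((X * X).trace) := by
      rw [Finset.sum_comm]
      rw [Finset.sum_congr rfl fun j _ => h2 j]
      have e : ∀ j : Fin l, ((A j * (X * X) * (A j)ᴴ)).trace
          = ((X * X) * ((A j)ᴴ * A j)).trace := by
        intro j
        rw [show A j * (X * X) * (A j)ᴴ = A j * ((X * X) * (A j)ᴴ) by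
          simp [Matrix.mul_assoc], Matrix.trace_mul_comm]
        congr 1
        simp [Matrix.mul_assoc]
      rw [Finset.sum_congr rfl fun j _ => e j]
      have := sum_trace_mid (X * X) 1 (fun j => (A j)ᴴ * A j)
      simp only [Matrix.mul_one] at this
      rw [this, hA, Matrix.mul_one]
    simp only [← Complex.re_sum]
    rw [h3]
  have hineq : ∀ i j, 2 * (((P i j)ᴴ * Q i j).trace).re
      ≤ (((P i j)ᴴ * P i j).trace).re + (((Q i j)ᴴ * Q i j).trace).re :=
    fun i j => re_trace_le _ _
  have hre : (((∑ i, A i * X * (A i)ᴴ) * (∑ i, A i * X * (A i)ᴴ)).trace).re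
      = ∑ i, ∑ j, (((P i j)ᴴ * Q i j).trace).re := by
    rw [hsum]; simp [Complex.re_sum]
  rw [hre]
  have := Finset.sum_le_sum (s := Finset.univ)
    (fun i (_ : i ∈ Finset.univ) => Finset.sum_le_sum
      (fun j (_ : j ∈ Finset.univ) => hineq i j))
  simp only [Finset.sum_add_distrib] at this
  rw [hPP, hQQ] at this
  have h2 : ∑ i, ∑ j, 2 * (((P i j)ᴴ * Q i j).trace).re
      = 2 * ∑ i, ∑ j, (((P i j)ᴴ * Q i j).trace).re := by
    rw [Finset.mul_sum]
    exact Finset.sum_congr rfl fun i _ => by rw [Finset.mul_sum]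
  rw [h2] at this
  linarith

lemma trace_sq_eigs {n : ℕ} (Y : Matrix (Fin n) (Fin n) ℂ) (hY : Y.IsHermitian) :
    ((Y * Y).trace).re = ∑ i, (hY.eigenvalues i) ^ 2 := by
  set U := (hY.eigenvectorUnitary : Matrix (Fin n) (Fin n) ℂ)
  set D := Matrix.diagonal (RCLike.ofReal ∘ hY.eigenvalues : Fin n → ℂ)
  have hspec : Y = U * D * star U := hY.spectral_theorem
  have hUU : star U * U = 1 := (Matrix.mem_unitaryGroup_iff').mp hY.eigenvectorUnitary.2
  have : Y * Y = U * (D * D) * star U := by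
    rw [hspec]
    calc (U * D * star U) * (U * D * star U)
        = U * D * (star U * U) * D * star U := by simp [Matrix.mul_assoc]
      _ = U * (D * D) * star U := by rw [hUU]; simp [Matrix.mul_assoc]
  rw [this, Matrix.trace_mul_cycle, ← Matrix.mul_assoc, hUU, Matrix.one_mul]
  have : D * D = Matrix.diagonal (fun i => ((hY.eigenvalues i : ℂ)) ^ 2) := by
    rw [Matrix.diagonal_mul_diagonal]
    congr 1
    ext i
    simp [sq]
  rw [this, Matrix.trace_diagonal]
  rw [Complex.re_sum]
  congr 1
  ext i
  rw [show ((hY.eigenvalues i : ℂ)) ^ 2 = ((hY.eigenvalues i ^ 2 : ℝ) : ℂ) by push_cast; ring]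
  exact Complex.ofReal_re _

-- complex version of trace of X Xᴴ
lemma trace_mul_conjTranspose_eq {n : ℕ} (X : Matrix (Fin n) (Fin n) ℂ) :
    (X * Xᴴ).trace = ((∑ i, ∑ j, Complex.normSq (X i j) : ℝ) : ℂ) := by
  push_cast
  simp [Matrix.trace, Matrix.mul_apply, Matrix.conjTranspose_apply, Matrix.diag,
    Complex.mul_conj]

lemma combo_trace {n : ℕ} (p q : ℝ) (M N : Matrix (Fin n) (Fin n) ℂ) :
    ((((p:ℂ)) • M + ((q:ℂ)) • N) * ((((p:ℂ)) • M + ((q:ℂ)) • N))).trace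
      = (p:ℂ)^2 * (M*M).trace + ((p*q : ℝ) : ℂ) * ((M*N).trace + (N*M).trace)
        + (q:ℂ)^2 * (N*N).trace := by
  simp only [Matrix.add_mul, Matrix.mul_add, Matrix.smul_mul, Matrix.mul_smul,
    Matrix.trace_add, Matrix.trace_smul, smul_smul, smul_eq_mul]
  push_cast
  ring

lemma real_smul_herm {n : ℕ} (p : ℝ) {M : Matrix (Fin n) (Fin n) ℂ} (hM : M.IsHermitian) :
    (((p:ℂ)) • M).IsHermitian := by
  unfold Matrix.IsHermitian
  rw [Matrix.conjTranspose_smul, hM.eq]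
  congr 1
  simp [Complex.star_def]

section Tau
variable {n l : ℕ} (A : Fin l → Matrix (Fin n) (Fin n) ℂ)

lemma sum_trace_mid' {n l : ℕ} (M N : Matrix (Fin n) (Fin n) ℂ)
    (B : Fin l → Matrix (Fin n) (Fin n) ℂ) :
    ∑ j, (M * B j * N).trace = (M * (∑ j, B j) * N).trace := by
  rw [Finset.mul_sum, Finset.sum_mul, Matrix.trace_sum]

lemma tau_herm {X : Matrix (Fin n) (Fin n) ℂ} (hX : X.IsHermitian) :
    (∑ i, A i * X * (A i)ᴴ).IsHermitian := by
  unfold Matrix.IsHermitian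
  rw [Matrix.conjTranspose_sum]
  refine Finset.sum_congr rfl fun i _ => ?_
  simp [Matrix.conjTranspose_mul, hX.eq, Matrix.mul_assoc]

lemma tau_one (hA' : ∑ i, A i * (A i)ᴴ = 1) :
    ∑ i, A i * (1 : Matrix (Fin n) (Fin n) ℂ) * (A i)ᴴ = 1 := by
  simp only [Matrix.mul_one]
  exact hA'

lemma tau_trace (hA : ∑ i, (A i)ᴴ * A i = 1) (X : Matrix (Fin n) (Fin n) ℂ) :
    (∑ i, A i * X * (A i)ᴴ).trace = X.trace := by
  rw [Matrix.trace_sum]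
  have h1 : ∀ i, (A i * X * (A i)ᴴ).trace = (1 * ((A i)ᴴ * A i) * X).trace := by
    intro i
    rw [Matrix.trace_mul_cycle]
    congr 1
    simp [Matrix.mul_assoc]
  rw [Finset.sum_congr rfl fun i _ => h1 i, sum_trace_mid', hA]
  simp

lemma tau_combo (hA' : ∑ i, A i * (A i)ᴴ = 1) (p q : ℝ) (Z : Matrix (Fin n) (Fin n) ℂ) :
    ∑ i, A i * (((p:ℂ)) • 1 + ((q:ℂ)) • Z) * (A i)ᴴ
      = ((p:ℂ)) • 1 + ((q:ℂ)) • ∑ i, A i * Z * (A i)ᴴ := by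
  have : ∀ i, A i * (((p:ℂ)) • 1 + ((q:ℂ)) • Z) * (A i)ᴴ
      = (p:ℂ) • (A i * (A i)ᴴ) + (q:ℂ) • (A i * Z * (A i)ᴴ) := by
    intro i
    simp [Matrix.mul_add, Matrix.add_mul, Matrix.mul_smul, Matrix.smul_mul]
  rw [Finset.sum_congr rfl fun i _ => this i, Finset.sum_add_distrib,
    ← Finset.smul_sum, ← Finset.smul_sum, hA']

end Tau

lemma eigsDesc_sum_sq {n : ℕ} (Y : Matrix (Fin n) (Fin n) ℂ) (hY : Y.IsHermitian) :
    ∑ i, (eigsDesc Y i) ^ 2 = ∑ i, (hY.eigenvalues i) ^ 2 := by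
  rw [eigsDesc, dif_pos hY]
  exact Fintype.sum_equiv ((Fin.revPerm).trans (Tuple.sort hY.eigenvalues))
    _ _ (fun i => rfl)

lemma frob_sq {n : ℕ} (X : Matrix (Fin n) (Fin n) ℂ) :
    frobNorm X ^ 2 = ((X * Xᴴ).trace).re := by
  rw [frobNorm]
  exact Real.sq_sqrt (trace_sq_re_nonneg X)

lemma exists_ab (α β : ℝ) : ∃ a b : ℝ, a^2 + b^2 = 1 ∧ a*α + b*β = 0 := by
  by_cases h0 : α = 0 ∧ β = 0
  · exact ⟨0, 1, by norm_num, by simp [h0.1, h0.2]⟩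
  · have hr2 : 0 < α^2 + β^2 := by
      rcases not_and_or.mp h0 with h | h
      · have h1 : 0 < α^2 := lt_of_le_of_ne (sq_nonneg α) (Ne.symm (pow_ne_zero 2 h))
        nlinarith [sq_nonneg β]
      · have h1 : 0 < β^2 := lt_of_le_of_ne (sq_nonneg β) (Ne.symm (pow_ne_zero 2 h))
        nlinarith [sq_nonneg α]
    have hrpos : 0 < Real.sqrt (α^2+β^2) := Real.sqrt_pos.mpr hr2
    have hr2eq : Real.sqrt (α^2+β^2) ^ 2 = α^2+β^2 := Real.sq_sqrt hr2.le
    refine ⟨β / Real.sqrt (α^2+β^2), -α / Real.sqrt (α^2+β^2), ?_, by field_simp; ring⟩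
    field_simp
    linarith [hr2eq]

set_option maxHeartbeats 1000000 in
/-- Let τ : Sₙ(ℂ) → Sₙ(ℂ) be a bi-quantum channel with n ≥ 2.  Then for
every unit vector x ∈ ℂⁿ, ∑ᵢ λᵢ(τ(x x*))² = ‖τ(x x*)‖_F² ≤ σ₂(τ)² + (1 - σ₂(τ)²)/n. -/
theorem stmt_17 {n l : ℕ} (hn : 2 ≤ n) (A : Fin l → Matrix (Fin n) (Fin n) ℂ)
    (hA : ∑ i, (A i)ᴴ * A i = 1) (hA' : ∑ i, A i * (A i)ᴴ = 1)
    (x : Fin n → ℂ) (hx : star x ⬝ᵥ x = 1)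
    (Y : Matrix (Fin n) (Fin n) ℂ)
    (hY : Y = ∑ i, A i * Matrix.vecMulVec x (star x) * (A i)ᴴ)
    (s : ℝ) (hs : s = sigma2 (fun X => ∑ i, A i * X * (A i)ᴴ)) :
    (∑ i, (eigsDesc Y i) ^ 2) = frobNorm Y ^ 2 ∧
    frobNorm Y ^ 2 ≤ s ^ 2 + (1 - s ^ 2) / n := by
  -- numeric basics
  have hn0 : (0:ℝ) < n := by
    have : (2:ℝ) ≤ n := by exact_mod_cast hn
    linarith
  have hnC : (n:ℂ) ≠ 0 := by
    exact_mod_cast (by omega : (n:ℕ) ≠ 0)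
  have hnR : (n:ℝ) ≠ 0 := ne_of_gt hn0
  set c : ℝ := (n:ℝ)⁻¹ with hcdef
  set z2 : ℝ := 1 - c with hz2def
  have hz2pos : 0 < z2 := by
    rw [hz2def, hcdef]
    have h2 : (2:ℝ) ≤ n := by exact_mod_cast hn
    have : (n:ℝ)⁻¹ < 1 := by
      rw [inv_lt_one_iff₀]
      right; linarith
    linarith
  -- the rank one projection
  set X₀ := Matrix.vecMulVec x (star x) with hX₀def
  have hxsum : ∑ i, star (x i) * x i = 1 := by
    simpa [dotProduct] using hx
  have hX₀H : X₀.IsHermitian := by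
    unfold Matrix.IsHermitian
    ext i j
    simp [hX₀def, Matrix.conjTranspose_apply, Matrix.vecMulVec_apply, mul_comm]
  have htrX₀ : X₀.trace = 1 := by
    simp only [Matrix.trace, Matrix.diag, hX₀def, Matrix.vecMulVec_apply, Pi.star_apply]
    rw [← hxsum]
    exact Finset.sum_congr rfl fun i _ => by ring
  have hX₀sq : X₀ * X₀ = X₀ := by
    ext i j
    simp only [hX₀def, Matrix.mul_apply, Matrix.vecMulVec_apply, Pi.star_apply]
    calc ∑ k, x i * star (x k) * (x k * star (x j))
        = (x i * star (x j)) * ∑ k, star (x k) * x k := by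
          rw [Finset.mul_sum]
          exact Finset.sum_congr rfl fun k _ => by ring
      _ = x i * star (x j) := by rw [hxsum, mul_one]
  -- Z and W
  set Z := X₀ - ((c:ℝ):ℂ) • 1 with hZdef
  set W := ∑ i, A i * Z * (A i)ᴴ with hWdef
  have hZH : Z.IsHermitian := hX₀H.sub (real_smul_herm c Matrix.isHermitian_one)
  have htrZ : Z.trace = 0 := by
    rw [hZdef, Matrix.trace_sub, Matrix.trace_smul, htrX₀, Matrix.trace_one]
    rw [hcdef]
    push_cast
    field_simp
    rw [Fintype.card_fin, smul_eq_mul, one_div, inv_mul_cancel₀ hnC, sub_self]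
  have hcsq : ((c:ℝ):ℂ)^2 * (n:ℂ) = ((c:ℝ):ℂ) := by
    rw [hcdef]
    push_cast
    field_simp
  have hZcombo : Z = (((1:ℝ)):ℂ) • X₀ + (((-c:ℝ)):ℂ) • 1 := by
    rw [hZdef]
    push_cast
    simp [sub_eq_add_neg, neg_smul]
  have htrZZ : (Z * Z).trace = ((z2:ℝ):ℂ) := by
    rw [hZcombo, combo_trace]
    simp only [Matrix.one_mul, Matrix.mul_one, hX₀sq, htrX₀, Matrix.trace_one, Fintype.card_fin]
    rw [hz2def, hcdef]
    push_cast
    field_simp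
    ring
  have hWH : W.IsHermitian := tau_herm A hZH
  have htrW : W.trace = 0 := by rw [hWdef, tau_trace A hA Z, htrZ]
  set w2 : ℝ := ((W * W).trace).re with hw2def
  have htrWW : (W * W).trace = ((w2:ℝ):ℂ) := by
    rw [show W * W = W * Wᴴ by rw [hWH.eq], trace_mul_conjTranspose_eq]
    rw [hw2def, show W * W = W * Wᴴ by rw [hWH.eq], trace_mul_conjTranspose_eq]
    simp
  have hw2nonneg : 0 ≤ w2 := by
    rw [hw2def, show W * W = W * Wᴴ by rw [hWH.eq]]
    exact trace_sq_re_nonneg W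
  have hw2le : w2 ≤ z2 := by
    have h := contraction A hA hA' Z hZH
    rw [← hWdef, hw2def] at *
    rw [htrZZ] at h
    simpa using h
  -- Y in terms of W
  have hYW : Y = ((c:ℝ):ℂ) • 1 + W := by
    rw [hY]
    have hX₀Z : X₀ = ((c:ℝ):ℂ) • 1 + (((1:ℝ)):ℂ) • Z := by
      rw [hZdef]
      push_cast
      simp
    calc ∑ i, A i * X₀ * (A i)ᴴ
        = ∑ i, A i * (((c:ℝ):ℂ) • 1 + (((1:ℝ)):ℂ) • Z) * (A i)ᴴ := by rw [← hX₀Z]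
      _ = ((c:ℝ):ℂ) • 1 + (((1:ℝ)):ℂ) • W := by rw [tau_combo A hA' c 1 Z, hWdef]
      _ = ((c:ℝ):ℂ) • 1 + W := by push_cast; simp
  have hYH : Y.IsHermitian := by
    rw [hYW]
    exact (real_smul_herm c Matrix.isHermitian_one).add hWH
  -- boundedness of the inner sets
  have hbdd : ∀ U : Matrix (Fin n) (Fin n) ℂ,
      BddAbove {d : ℝ | ∃ X : Matrix (Fin n) (Fin n) ℂ, X.IsHermitian ∧ frobNorm X ≤ 1 ∧
        (U * X).trace.re = 0 ∧ d = frobNorm (∑ i, A i * X * (A i)ᴴ)} := by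
    intro U
    refine ⟨1, fun d hd => ?_⟩
    obtain ⟨X, hXH, hX1, -, rfl⟩ := hd
    have hsq : frobNorm (∑ i, A i * X * (A i)ᴴ) ^ 2 ≤ 1 := by
      rw [frob_sq, (tau_herm A hXH).eq]
      have h1 := contraction A hA hA' X hXH
      have h2 : ((X * X).trace).re ≤ 1 := by
        rw [show X * X = X * Xᴴ by rw [hXH.eq], ← frob_sq]
        nlinarith [Real.sqrt_nonneg ((X * Xᴴ).trace.re), hX1,
          (by rw [frobNorm] : frobNorm X = Real.sqrt ((X * Xᴴ).trace.re))]
      linarith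
    nlinarith [Real.sqrt_nonneg (((∑ i, A i * X * (A i)ᴴ) *
        (∑ i, A i * X * (A i)ᴴ)ᴴ).trace.re),
      (by rw [frobNorm] : frobNorm (∑ i, A i * X * (A i)ᴴ)
        = Real.sqrt (((∑ i, A i * X * (A i)ᴴ) * (∑ i, A i * X * (A i)ᴴ)ᴴ).trace.re))]
  -- key lower bound for each U
  have key : ∀ U : Matrix (Fin n) (Fin n) ℂ, U.IsHermitian → U ≠ 0 →
      Real.sqrt (w2 / z2) ≤ sSup {d : ℝ | ∃ X : Matrix (Fin n) (Fin n) ℂ, X.IsHermitian ∧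
        frobNorm X ≤ 1 ∧ (U * X).trace.re = 0 ∧
        d = frobNorm (∑ i, A i * X * (A i)ᴴ)} := by
    intro U hU hU0
    have hsnpos : 0 < Real.sqrt n := Real.sqrt_pos.mpr hn0
    have hsn2 : Real.sqrt n ^ 2 = (n:ℝ) := Real.sq_sqrt hn0.le
    have hszpos : 0 < Real.sqrt z2 := Real.sqrt_pos.mpr hz2pos
    have hsz2 : Real.sqrt z2 ^ 2 = z2 := Real.sq_sqrt hz2pos.le
    set α : ℝ := (Real.sqrt n)⁻¹ * (U.trace).re with hαdef
    set β : ℝ := (Real.sqrt z2)⁻¹ * (((U * Z).trace).re) with hβdef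
    obtain ⟨a, b, hab, hcon⟩ := exists_ab α β
    set p : ℝ := a * (Real.sqrt n)⁻¹ with hpdef
    set q : ℝ := b * (Real.sqrt z2)⁻¹ with hqdef
    set X := ((p:ℝ):ℂ) • (1 : Matrix (Fin n) (Fin n) ℂ) + ((q:ℝ):ℂ) • Z with hXdef
    have hXH : X.IsHermitian :=
      (real_smul_herm p Matrix.isHermitian_one).add (real_smul_herm q hZH)
    have hp2 : p^2 * (n:ℝ) = a^2 := by
      rw [hpdef, mul_pow, inv_pow, hsn2, mul_assoc, inv_mul_cancel₀ hnR, mul_one]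
    have hq2 : q^2 * z2 = b^2 := by
      rw [hqdef, mul_pow, inv_pow, hsz2, mul_assoc,
        inv_mul_cancel₀ (ne_of_gt hz2pos), mul_one]
    have htrXX : (X * X).trace = ((1:ℝ):ℂ) := by
      rw [hXdef, combo_trace]
      simp only [Matrix.one_mul, Matrix.mul_one, Matrix.trace_one, Fintype.card_fin,
        htrZ, htrZZ]
      have hreal : p^2*(n:ℝ) + q^2*z2 = 1 := by linarith [hp2, hq2, hab]
      have hrealC := congrArg (Complex.ofReal) hreal
      push_cast at hrealC ⊢
      linear_combination hrealC
    have hXfrob : frobNorm X ≤ 1 := by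
      rw [frobNorm, hXH.eq, htrXX]
      simp
    have hXcon : (U * X).trace.re = 0 := by
      rw [hXdef]
      rw [show U * (((p:ℝ):ℂ) • (1 : Matrix (Fin n) (Fin n) ℂ) + ((q:ℝ):ℂ) • Z)
          = ((p:ℝ):ℂ) • U + ((q:ℝ):ℂ) • (U * Z) by
        simp [Matrix.mul_add, Matrix.mul_smul, Matrix.mul_one]]
      rw [Matrix.trace_add, Matrix.trace_smul, Matrix.trace_smul]
      simp only [Complex.add_re, smul_eq_mul, Complex.re_ofReal_mul]
      rw [hαdef, hβdef] at hcon
      rw [hpdef, hqdef]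
      linarith [hcon]
    have hτX : ∑ i, A i * X * (A i)ᴴ = ((p:ℝ):ℂ) • 1 + ((q:ℝ):ℂ) • W := by
      rw [hXdef, tau_combo A hA' p q Z, hWdef]
    have htrτXX : ((∑ i, A i * X * (A i)ᴴ) * (∑ i, A i * X * (A i)ᴴ)).trace
        = (((a^2 + b^2 * (w2/z2)) : ℝ) : ℂ) := by
      rw [hτX, combo_trace]
      simp only [Matrix.one_mul, Matrix.mul_one, Matrix.trace_one, Fintype.card_fin,
        htrW, htrWW]
      have hq2' : q^2 * w2 = b^2 * (w2/z2) := by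
        rw [hqdef, mul_pow, inv_pow, hsz2]
        ring
      have hreal : p^2*(n:ℝ) + q^2*w2 = a^2 + b^2*(w2/z2) := by linarith [hp2, hq2']
      have hrealC := congrArg (Complex.ofReal) hreal
      push_cast at hrealC ⊢
      linear_combination hrealC
    refine le_trans ?_ (le_csSup (hbdd U) ⟨X, hXH, hXfrob, hXcon, rfl⟩)
    rw [frobNorm, (tau_herm A hXH).eq, htrτXX]
    simp only [Complex.ofReal_re]
    apply Real.sqrt_le_sqrt
    have ht1 : w2/z2 ≤ 1 := (div_le_one hz2pos).mpr hw2le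
    nlinarith [sq_nonneg a, sq_nonneg b]
  -- relate to sigma2
  have hone0 : (1 : Matrix (Fin n) (Fin n) ℂ) ≠ 0 := by
    intro h
    have h00 := congrFun (congrFun h ⟨0, by omega⟩) ⟨0, by omega⟩
    simp [Matrix.one_apply] at h00
  simp only [sigma2] at hs
  have hμs : Real.sqrt (w2/z2) ≤ s := by
    rw [hs]
    refine le_csInf ⟨_, ⟨1, Matrix.isHermitian_one, hone0, rfl⟩⟩ ?_
    rintro cc ⟨U, hU, hU0, rfl⟩
    exact key U hU hU0
  have hw2s : w2 ≤ s^2 * z2 := by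
    have h2 := Real.sq_sqrt (div_nonneg hw2nonneg hz2pos.le)
    have h1 : w2/z2 ≤ s^2 := by
      nlinarith [Real.sqrt_nonneg (w2/z2)]
    calc w2 = (w2/z2)*z2 := by field_simp
      _ ≤ s^2 * z2 := by nlinarith [hz2pos]
  constructor
  · rw [eigsDesc_sum_sq Y hYH, ← trace_sq_eigs Y hYH, frob_sq, hYH.eq]
  · rw [frob_sq, hYH.eq]
    have hcsqR : c^2 * (n:ℝ) = c := by
      rw [hcdef, sq]
      field_simp
    have htrYY : (Y * Y).trace = ((c + w2 : ℝ):ℂ) := by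
      rw [hYW]
      rw [show ((c:ℝ):ℂ) • (1 : Matrix (Fin n) (Fin n) ℂ) + W
          = ((c:ℝ):ℂ) • 1 + (((1:ℝ)):ℂ) • W by push_cast; simp]
      rw [combo_trace]
      simp only [Matrix.one_mul, Matrix.mul_one, Matrix.trace_one, Fintype.card_fin,
        htrW, htrWW]
      have hreal : c^2*(n:ℝ) + 1^2*w2 = c + w2 := by rw [hcsqR]; ring
      have hrealC := congrArg (Complex.ofReal) hreal
      push_cast at hrealC ⊢
      linear_combination hrealC
    rw [htrYY, Complex.ofReal_re]
    have hfin : c + s^2*z2 = s^2 + (1-s^2)/n := by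
      rw [hz2def, hcdef]
      field_simp
      ring
    have hle : c + w2 ≤ c + s^2*z2 := by linarith [hw2s]
    rw [hfin] at hle
    exact hle
end

section
/- Let τ : S_n(ℂ) → S_n(ℂ) be a unitary quantum channel, τ(X) = ∑_{i=1}^l t_i² Q_i X Q_i^*, with l ≥ 3, t_i ≠ 0 for all i, Q_1 = I_n, the Q_i unitary with ∑_{i=1}^l t_i² = 1, and suppose Q_2,…,Q_l have no common invariant subspace of ℂ^n other than {0} and ℂ^n. Then σ_2(τ) < σ_1(τ) = 1. -/
open scoped ComplexOrder
open Matrix Kronecker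
open scoped InnerProductSpace

noncomputable def eFun {n : ℕ} (X : Matrix (Fin n) (Fin n) ℂ) :
    EuclideanSpace ℂ (Fin n × Fin n) := WithLp.toLp 2 (fun p : Fin n × Fin n => X p.1 p.2)

noncomputable def matFun {n : ℕ} (y : EuclideanSpace ℂ (Fin n × Fin n)) :
    Matrix (Fin n) (Fin n) ℂ := Matrix.of fun i j => y (i, j)

lemma matFun_eFun {n : ℕ} (X : Matrix (Fin n) (Fin n) ℂ) : matFun (eFun X) = X := rfl

lemma eFun_matFun {n : ℕ} (y : EuclideanSpace ℂ (Fin n × Fin n)) : eFun (matFun y) = y := by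
  ext p
  show y (p.1, p.2) = y p
  rw [Prod.mk.eta]

noncomputable def eLin (n : ℕ) :
    Matrix (Fin n) (Fin n) ℂ →ₗ[ℂ] EuclideanSpace ℂ (Fin n × Fin n) where
  toFun := eFun
  map_add' X Y := rfl
  map_smul' c X := rfl

noncomputable def mLin (n : ℕ) :
    EuclideanSpace ℂ (Fin n × Fin n) →ₗ[ℂ] Matrix (Fin n) (Fin n) ℂ where
  toFun := matFun
  map_add' X Y := rfl
  map_smul' c X := rfl

lemma frob_nonneg {n m : Type*} [Fintype n] [Fintype m] (X : Matrix n m ℂ) :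
    0 ≤ frobNorm X := Real.sqrt_nonneg _

lemma frob_eq {n : ℕ} (X : Matrix (Fin n) (Fin n) ℂ) : frobNorm X = ‖eFun X‖ := by
  rw [frobNorm, EuclideanSpace.norm_eq]
  congr 1
  have h1 : (X * Xᴴ).trace = ∑ i, ∑ j, X i j * (starRingEnd ℂ) (X i j) := by
    simp [Matrix.trace, Matrix.diag, Matrix.mul_apply, Matrix.conjTranspose_apply]
  rw [h1, Complex.re_sum, Fintype.sum_prod_type]
  refine Finset.sum_congr rfl fun i _ => ?_
  rw [Complex.re_sum]
  refine Finset.sum_congr rfl fun j _ => ?_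
  rw [Complex.mul_conj, Complex.ofReal_re]
  show Complex.normSq (X i j) = ‖X i j‖ ^ 2
  rw [Complex.sq_norm]

lemma frob_conj {n : ℕ} {Q : Matrix (Fin n) (Fin n) ℂ} (hQ : Qᴴ * Q = 1)
    (X : Matrix (Fin n) (Fin n) ℂ) : frobNorm (Q * X * Qᴴ) = frobNorm X := by
  unfold frobNorm
  have h : (Q * X * Qᴴ) * (Q * X * Qᴴ)ᴴ = Q * (X * Xᴴ) * Qᴴ := by
    simp only [Matrix.conjTranspose_mul, Matrix.conjTranspose_conjTranspose, Matrix.mul_assoc]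
    rw [← Matrix.mul_assoc Qᴴ Q, hQ, Matrix.one_mul]
  rw [h, Matrix.trace_mul_cycle, hQ, Matrix.one_mul]

/-- Let τ(X) = ∑ᵢ tᵢ² Qᵢ X Qᵢ* be a unitary quantum channel with l ≥ 3,
tᵢ ≠ 0 for all i, ∑ᵢ tᵢ² = 1, Q₁ = Iₙ, all Qᵢ unitary, and suppose Q₂,…,Q_l have no
common invariant subspace other than {0} and ℂⁿ.  Then σ₂(τ) < σ₁(τ) = 1. -/
theorem stmt_19 {n l : ℕ} (hn : 0 < n) (hl : 3 ≤ l)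
    (t : Fin l → ℝ) (Q : Fin l → Matrix (Fin n) (Fin n) ℂ)
    (ht : ∀ i, t i ≠ 0) (htsum : ∑ i, t i ^ 2 = 1)
    (hQ : ∀ i, (Q i)ᴴ * Q i = 1 ∧ Q i * (Q i)ᴴ = 1)
    (hQ0 : Q ⟨0, by omega⟩ = 1)
    (hinv : ∀ V : Submodule ℂ (Fin n → ℂ),
      (∀ i : Fin l, (i : ℕ) ≠ 0 → ∀ v ∈ V, (Q i).mulVec v ∈ V) → V = ⊥ ∨ V = ⊤) :
    sigma2 (fun X => ∑ i, ((t i : ℂ) ^ 2) • (Q i * X * (Q i)ᴴ)) <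
        opNorm (fun X => ∑ i, ((t i : ℂ) ^ 2) • (Q i * X * (Q i)ᴴ)) ∧
      opNorm (fun X => ∑ i, ((t i : ℂ) ^ 2) • (Q i * X * (Q i)ᴴ)) = 1 := by
  classical
  set τ : Matrix (Fin n) (Fin n) ℂ → Matrix (Fin n) (Fin n) ℂ :=
    fun X => ∑ i, ((t i : ℂ) ^ 2) • (Q i * X * (Q i)ᴴ) with hτdef
  have hs : ∀ i, (0:ℝ) < t i ^ 2 :=
    fun i => lt_of_le_of_ne (sq_nonneg _) (Ne.symm (pow_ne_zero 2 (ht i)))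
  have hcoef : ∀ i : Fin l, ((t i : ℂ) ^ 2) = ((t i ^ 2 : ℝ) : ℂ) := by
    intro i; push_cast; ring
  have hnormc : ∀ i : Fin l, ‖((t i : ℂ) ^ 2)‖ = t i ^ 2 := by
    intro i
    rw [hcoef, Complex.norm_real, Real.norm_eq_abs, abs_of_pos (hs i)]
  have heFunτ : ∀ X, eFun (τ X) = ∑ i, ((t i : ℂ) ^ 2) • eFun (Q i * X * (Q i)ᴴ) := by
    intro X
    show eLin n (τ X) = _
    rw [hτdef]
    simp only [map_sum, _root_.map_smul]
    rfl
  have contraction : ∀ X : Matrix (Fin n) (Fin n) ℂ, frobNorm (τ X) ≤ frobNorm X := by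
    intro X
    rw [frob_eq, heFunτ, frob_eq]
    calc ‖∑ i, ((t i:ℂ)^2) • eFun (Q i * X * (Q i)ᴴ)‖
        ≤ ∑ i, ‖((t i:ℂ)^2) • eFun (Q i * X * (Q i)ᴴ)‖ := norm_sum_le _ _
      _ = ∑ i, t i ^ 2 * ‖eFun X‖ := by
          refine Finset.sum_congr rfl fun i _ => ?_
          rw [norm_smul, hnormc, ← frob_eq, frob_conj (hQ i).1, frob_eq]
      _ = ‖eFun X‖ := by rw [← Finset.sum_mul, htsum, one_mul]
  -- the fixed point (√n)⁻¹ • 1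
  have hn' : (0:ℝ) < (n:ℝ) := by exact_mod_cast hn
  set c₀ : ℝ := (Real.sqrt n)⁻¹ with hc₀
  have hc₀pos : 0 < c₀ := inv_pos.2 (Real.sqrt_pos.2 hn')
  set X₁ : Matrix (Fin n) (Fin n) ℂ := (c₀ : ℂ) • 1 with hX₁
  have hX₁herm : X₁.IsHermitian := by
    show X₁ᴴ = X₁
    rw [hX₁, Matrix.conjTranspose_smul, Matrix.conjTranspose_one]
    norm_num
  have hX₁norm : frobNorm X₁ = 1 := by
    have h1 : X₁ * X₁ᴴ = (((c₀ : ℂ) * c₀)) • 1 := by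
      rw [show X₁ᴴ = X₁ from hX₁herm, hX₁, Matrix.smul_mul, Matrix.mul_smul, Matrix.one_mul,
        smul_smul]
    rw [frobNorm, h1, Matrix.trace_smul, Matrix.trace_one]
    have h2 : ((((c₀:ℂ) * c₀)) • ((Fintype.card (Fin n) : ℂ))).re = c₀ * c₀ * n := by
      rw [Fintype.card_fin, smul_eq_mul]
      have : ((c₀:ℂ) * c₀ * n) = (((c₀ * c₀ * n : ℝ)) : ℂ) := by push_cast; ring
      rw [this, Complex.ofReal_re]
    rw [h2]
    have hss : Real.sqrt n * Real.sqrt n = n := Real.mul_self_sqrt hn'.le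
    have h3 : c₀ * c₀ * n = 1 := by
      rw [hc₀, ← mul_inv, hss]
      exact inv_mul_cancel₀ (ne_of_gt hn')
    rw [h3, Real.sqrt_one]
  have hτX₁ : τ X₁ = X₁ := by
    rw [hτdef]
    have hfix : ∀ i : Fin l, Q i * X₁ * (Q i)ᴴ = X₁ := by
      intro i
      rw [hX₁, Matrix.mul_smul, Matrix.mul_one, Matrix.smul_mul, (hQ i).2]
    simp only [hfix]
    rw [← Finset.sum_smul]
    have hsum1 : (∑ i, ((t i:ℂ)^2)) = 1 := by
      have : (∑ i, ((t i:ℂ)^2)) = ((∑ i, t i ^ 2 : ℝ) : ℂ) := by push_cast; rfl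
      rw [this, htsum, Complex.ofReal_one]
    rw [hsum1, one_smul]
  -- opNorm = 1
  have hub : ∀ x ∈ {c : ℝ | ∃ X : Matrix (Fin n) (Fin n) ℂ,
      X.IsHermitian ∧ frobNorm X ≤ 1 ∧ c = frobNorm (τ X)}, x ≤ 1 := by
    rintro x ⟨X, hX, hX1, rfl⟩
    exact (contraction X).trans hX1
  have hop : opNorm τ = 1 := by
    unfold opNorm
    have hmem : (1:ℝ) ∈ {c : ℝ | ∃ X : Matrix (Fin n) (Fin n) ℂ,
        X.IsHermitian ∧ frobNorm X ≤ 1 ∧ c = frobNorm (τ X)} :=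
      ⟨X₁, hX₁herm, hX₁norm.le, by rw [hτX₁, hX₁norm]⟩
    exact le_antisymm (Real.sSup_le hub zero_le_one) (le_csSup ⟨1, hub⟩ hmem)
  -- sigma2 ≤ sSup D
  set D : Set ℝ := {d : ℝ | ∃ X : Matrix (Fin n) (Fin n) ℂ, X.IsHermitian ∧ frobNorm X ≤ 1 ∧
      ((1 : Matrix (Fin n) (Fin n) ℂ) * X).trace.re = 0 ∧ d = frobNorm (τ X)} with hD
  have hone_ne : (1 : Matrix (Fin n) (Fin n) ℂ) ≠ 0 := by
    intro h
    have h2 := congrFun (congrFun h ⟨0, hn⟩) ⟨0, hn⟩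
    simp [Matrix.one_apply] at h2
  have hsig_le : sigma2 τ ≤ sSup D := by
    unfold sigma2
    apply csInf_le
    · refine ⟨0, ?_⟩
      rintro c ⟨U, hU, hU0, rfl⟩
      have hmem0 : frobNorm (τ 0) ∈ {d : ℝ | ∃ X : Matrix (Fin n) (Fin n) ℂ,
          X.IsHermitian ∧ frobNorm X ≤ 1 ∧ (U * X).trace.re = 0 ∧ d = frobNorm (τ X)} :=
        ⟨0, Matrix.isHermitian_zero, by simp [frobNorm], by simp, rfl⟩
      have hbdd : BddAbove {d : ℝ | ∃ X : Matrix (Fin n) (Fin n) ℂ,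
          X.IsHermitian ∧ frobNorm X ≤ 1 ∧ (U * X).trace.re = 0 ∧ d = frobNorm (τ X)} :=
        ⟨1, by rintro d ⟨X, hX, h1, h2, rfl⟩; exact (contraction X).trans h1⟩
      exact le_trans (frob_nonneg _) (le_csSup hbdd hmem0)
    · exact ⟨1, Matrix.isHermitian_one, hone_ne, by rw [hD]⟩
  -- compactness set-up
  set Tmat : Matrix (Fin n) (Fin n) ℂ →ₗ[ℂ] Matrix (Fin n) (Fin n) ℂ :=
    { toFun := τ
      map_add' := by
        intro A B
        simp only [hτdef, Matrix.mul_add, Matrix.add_mul, smul_add, Finset.sum_add_distrib]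
      map_smul' := by
        intro c A
        simp only [hτdef, RingHom.id_apply]
        rw [Finset.smul_sum]
        refine Finset.sum_congr rfl fun i _ => ?_
        rw [Matrix.mul_smul, Matrix.smul_mul, smul_comm] } with hTmat
  set T : EuclideanSpace ℂ (Fin n × Fin n) →ₗ[ℂ] EuclideanSpace ℂ (Fin n × Fin n) :=
    (eLin n).comp (Tmat.comp (mLin n)) with hT
  set f : EuclideanSpace ℂ (Fin n × Fin n) → ℝ := fun y => ‖T y‖ with hf
  have hfcont : Continuous f := T.continuous_of_finiteDimensional.norm
  have hfval : ∀ y, f y = frobNorm (τ (matFun y)) := by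
    intro y
    rw [frob_eq]
    rfl
  have hproj : ∀ p : Fin n × Fin n,
      Continuous (fun y : EuclideanSpace ℂ (Fin n × Fin n) => y p) := by
    intro p
    exact (EuclideanSpace.proj p).continuous
  set K : Set (EuclideanSpace ℂ (Fin n × Fin n)) :=
    {y | (matFun y).IsHermitian ∧ ‖y‖ ≤ 1 ∧ ((matFun y).trace).re = 0} with hK
  have hKclosed : IsClosed K := by
    rw [hK]
    have e1 : IsClosed {y : EuclideanSpace ℂ (Fin n × Fin n) | (matFun y).IsHermitian} := by
      have heq : {y : EuclideanSpace ℂ (Fin n × Fin n) | (matFun y).IsHermitian} =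
          ⋂ (i : Fin n) (j : Fin n), {y | star (y (j, i)) = y (i, j)} := by
        ext y
        simp only [Set.mem_setOf_eq, Set.mem_iInter]
        constructor
        · intro h i j
          have h2 := congrFun (congrFun h i) j
          rwa [Matrix.conjTranspose_apply] at h2
        · intro h
          apply Matrix.ext
          intro i j
          rw [Matrix.conjTranspose_apply]
          exact h i j
      rw [heq]
      exact isClosed_iInter fun i => isClosed_iInter fun j =>
        isClosed_eq (continuous_star.comp (hproj (j, i))) (hproj (i, j))
    have e2 : IsClosed {y : EuclideanSpace ℂ (Fin n × Fin n) | ‖y‖ ≤ 1} :=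
      isClosed_le continuous_norm continuous_const
    have e3 : IsClosed {y : EuclideanSpace ℂ (Fin n × Fin n) | ((matFun y).trace).re = 0} := by
      have hcont : Continuous fun y : EuclideanSpace ℂ (Fin n × Fin n) => ((matFun y).trace) := by
        show Continuous fun y : EuclideanSpace ℂ (Fin n × Fin n) => ∑ i : Fin n, y (i, i)
        exact continuous_finset_sum _ fun i _ => hproj (i, i)
      exact isClosed_eq (Complex.continuous_re.comp hcont) continuous_const
    exact (e1.inter (e2.inter e3) : IsClosed _)
  have hKsub : K ⊆ Metric.closedBall 0 1 := by
    intro y hy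
    rw [Metric.mem_closedBall, dist_zero_right]
    exact hy.2.1
  have hKcpt : IsCompact K := (isCompact_closedBall 0 1).of_isClosed_subset hKclosed hKsub
  have hK0 : (0 : EuclideanSpace ℂ (Fin n × Fin n)) ∈ K := by
    have hm0 : matFun (0 : EuclideanSpace ℂ (Fin n × Fin n)) = 0 := rfl
    refine ⟨?_, by simp, ?_⟩
    · rw [hm0]; exact Matrix.isHermitian_zero
    · rw [hm0]; simp
  obtain ⟨y₀, hy₀K, hy₀max'⟩ := hKcpt.exists_isMaxOn ⟨0, hK0⟩ hfcont.continuousOn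
  have hy₀max : ∀ y ∈ K, f y ≤ f y₀ := fun y hy => hy₀max' hy
  set X₀ : Matrix (Fin n) (Fin n) ℂ := matFun y₀ with hX₀
  have hX₀herm : X₀.IsHermitian := hy₀K.1
  have hbound : ∀ d ∈ D, d ≤ f y₀ := by
    rintro d ⟨X, hX, h1, h2, rfl⟩
    have hyK : eFun X ∈ K := by
      refine ⟨?_, ?_, ?_⟩
      · rw [matFun_eFun]; exact hX
      · rw [← frob_eq]; exact h1
      · rw [matFun_eFun]; rw [Matrix.one_mul] at h2; exact h2
    have h3 := hy₀max (eFun X) hyK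
    rwa [hfval, matFun_eFun] at h3
  have hXnorm_le : frobNorm X₀ ≤ 1 := by
    rw [hX₀, frob_eq, eFun_matFun]; exact hy₀K.2.1
  have hfy₀le : f y₀ ≤ 1 := by
    rw [hfval, ← hX₀]
    exact (contraction _).trans hXnorm_le
  have hstrict : f y₀ < 1 := by
    rcases lt_or_eq_of_le hXnorm_le with hlt | heq
    · calc f y₀ = frobNorm (τ X₀) := by rw [hfval, ← hX₀]
        _ ≤ frobNorm X₀ := contraction _
        _ < 1 := hlt
    · -- frobNorm X₀ = 1
      rcases lt_or_eq_of_le hfy₀le with h | hcon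
      · exact h
      exfalso
      have hτX₀ : frobNorm (τ X₀) = 1 := by
        have h4 := hfval y₀
        rw [← hX₀] at h4
        rw [← h4]
        exact hcon
      set a : Fin l → EuclideanSpace ℂ (Fin n × Fin n) :=
        fun i => eFun (Q i * X₀ * (Q i)ᴴ) with ha
      set B : EuclideanSpace ℂ (Fin n × Fin n) := ∑ i, ((t i:ℂ)^2) • a i with hB
      have hbB : eFun (τ X₀) = B := by rw [hB, ha]; exact heFunτ X₀
      have hna : ∀ i, ‖a i‖ = 1 := by
        intro i
        show ‖eFun (Q i * X₀ * (Q i)ᴴ)‖ = 1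
        rw [← frob_eq, frob_conj (hQ i).1, heq]
      have hnB : ‖B‖ = 1 := by rw [← hbB, ← frob_eq, hτX₀]
      have hre_le : ∀ i, RCLike.re (⟪a i, B⟫_ℂ) ≤ 1 := by
        intro i
        have h4 := re_inner_le_norm (𝕜 := ℂ) (a i) B
        rwa [hna, hnB, one_mul] at h4
      have hBB : RCLike.re (⟪B, B⟫_ℂ) = 1 := by
        rw [inner_self_eq_norm_sq, hnB]; norm_num
      have hbb : RCLike.re (⟪B, B⟫_ℂ) = ∑ i, t i ^ 2 * RCLike.re (⟪a i, B⟫_ℂ) := by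
        nth_rewrite 1 [hB]
        rw [sum_inner]
        simp only [RCLike.re_to_complex]
        rw [Complex.re_sum]
        refine Finset.sum_congr rfl fun i _ => ?_
        rw [inner_smul_left, hcoef i, Complex.conj_ofReal, Complex.re_ofReal_mul]
      have hsum0 : ∑ i, t i ^ 2 * (1 - RCLike.re (⟪a i, B⟫_ℂ)) = 0 := by
        simp only [mul_sub, mul_one, Finset.sum_sub_distrib]
        rw [htsum, ← hbb, hBB, sub_self]
      have heach : ∀ i, RCLike.re (⟪a i, B⟫_ℂ) = 1 := by
        intro i
        have hnn : ∀ j ∈ Finset.univ, (0:ℝ) ≤ t j ^ 2 * (1 - RCLike.re (⟪a j, B⟫_ℂ)) :=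
          fun j _ => mul_nonneg (sq_nonneg _) (by linarith [hre_le j])
        have h5 := (Finset.sum_eq_zero_iff_of_nonneg hnn).1 hsum0 i (Finset.mem_univ i)
        rcases mul_eq_zero.1 h5 with h6 | h6
        · exact absurd h6 (ne_of_gt (hs i))
        · linarith
      have haB : ∀ i, a i = B := by
        intro i
        have h3 : ‖a i - B‖ ^ 2 = 0 := by
          rw [norm_sub_sq (𝕜 := ℂ), hna i, hnB, heach i]; ring
        have h4 : ‖a i - B‖ = 0 := by
          exact pow_eq_zero_iff (two_ne_zero) |>.1 h3
        exact sub_eq_zero.1 (norm_eq_zero.1 h4)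
      have hfix : ∀ i : Fin l, Q i * X₀ * (Q i)ᴴ = X₀ := by
        intro i
        have h0 : a (⟨0, by omega⟩ : Fin l) = eFun X₀ := by
          show eFun (Q ⟨0, by omega⟩ * X₀ * (Q ⟨0, by omega⟩)ᴴ) = eFun X₀
          rw [hQ0, Matrix.conjTranspose_one, Matrix.one_mul, Matrix.mul_one]
        have h5 : a i = eFun X₀ := by rw [haB i, ← haB ⟨0, by omega⟩, h0]
        apply Matrix.ext
        intro p q
        have h8 : (a i) (p, q) = (eFun X₀) (p, q) := by rw [h5]
        exact h8
      have hcomm : ∀ i : Fin l, Q i * X₀ = X₀ * Q i := by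
        intro i
        calc Q i * X₀ = Q i * X₀ * ((Q i)ᴴ * Q i) := by rw [(hQ i).1, Matrix.mul_one]
          _ = (Q i * X₀ * (Q i)ᴴ) * Q i := by rw [Matrix.mul_assoc (Q i * X₀) ((Q i)ᴴ) (Q i)]
          _ = X₀ * Q i := by rw [hfix i]
      -- eigen-analysis
      set lam : ℝ := hX₀herm.eigenvalues ⟨0, hn⟩ with hlam
      set v : Fin n → ℂ := (hX₀herm.eigenvectorBasis ⟨0, hn⟩).ofLp with hv
      have hzv : X₀ *ᵥ v = (lam : ℂ) • v := by
        have h8 := hX₀herm.mulVec_eigenvectorBasis ⟨0, hn⟩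
        rw [← hv, ← hlam] at h8
        rw [h8]
        funext k
        simp [Complex.real_smul]
      have hv0 : v ≠ 0 := by
        intro h
        have h9 : hX₀herm.eigenvectorBasis ⟨0, hn⟩ = 0 := congrArg (WithLp.toLp 2) h
        exact (hX₀herm.eigenvectorBasis.toBasis.ne_zero ⟨0, hn⟩)
          (by rw [OrthonormalBasis.coe_toBasis]; exact h9)
      set V : Submodule ℂ (Fin n → ℂ) :=
        LinearMap.ker ((Matrix.mulVecLin X₀) - (lam : ℂ) • LinearMap.id) with hV
      have hmemV : ∀ u : Fin n → ℂ, u ∈ V ↔ X₀ *ᵥ u = (lam:ℂ) • u := by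
        intro u
        rw [hV, LinearMap.mem_ker, LinearMap.sub_apply, LinearMap.smul_apply,
          LinearMap.id_apply, sub_eq_zero, Matrix.mulVecLin_apply]
      have hVinv : ∀ i : Fin l, (i:ℕ) ≠ 0 → ∀ u ∈ V, (Q i).mulVec u ∈ V := by
        intro i _ u hu
        rw [hmemV] at hu ⊢
        rw [Matrix.mulVec_mulVec, ← hcomm i, ← Matrix.mulVec_mulVec, hu, Matrix.mulVec_smul]
      rcases hinv V hVinv with hbot | htop
      · have h10 : v ∈ V := (hmemV v).2 hzv
        rw [hbot, Submodule.mem_bot] at h10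
        exact hv0 h10
      · have hall : ∀ u, X₀ *ᵥ u = (lam:ℂ) • u := fun u => (hmemV u).1 (htop ▸ Submodule.mem_top)
        have hdiag : ∀ i j, X₀ i j = if i = j then (lam:ℂ) else 0 := by
          intro i j
          have h8 : X₀ *ᵥ (Pi.single j 1 : Fin n → ℂ) = (lam:ℂ) • (Pi.single j 1 : Fin n → ℂ) := hall _
          rw [Matrix.mulVec_single] at h8
          have h9 := congrFun h8 i
          simp only [mul_one, Pi.smul_apply, Pi.single_apply, smul_eq_mul, MulOpposite.op_one, one_smul] at h9
          rw [show X₀ i j = X₀.col j i from rfl, h9]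
          by_cases hij : i = j <;> simp [hij]
        have htr0 : (X₀.trace).re = n * lam := by
          have h11 : X₀.trace = ∑ i : Fin n, X₀ i i := rfl
          have h12 : ∀ i : Fin n, X₀ i i = (lam:ℂ) := fun i => by rw [hdiag]; simp
          rw [h11, Finset.sum_congr rfl fun i _ => h12 i, Finset.sum_const, Finset.card_univ,
            Fintype.card_fin, nsmul_eq_mul]
          have h13 : ((n:ℂ) * (lam:ℂ)) = (((n * lam : ℝ)) : ℂ) := by push_cast; ring
          rw [h13, Complex.ofReal_re]
        have htr : (X₀.trace).re = 0 := hy₀K.2.2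
        have hlam0 : lam = 0 := by
          rw [htr0] at htr
          rcases mul_eq_zero.1 htr with h | h
          · exact absurd h (ne_of_gt hn')
          · exact h
        have hX₀0 : X₀ = 0 := by
          apply Matrix.ext
          intro i j
          rw [hdiag, hlam0]
          by_cases hij : i = j <;> simp [hij]
        rw [hX₀0] at heq
        simp [frobNorm] at heq
  -- conclude
  have hf0 : (0:ℝ) ≤ f y₀ := by rw [hf]; exact norm_nonneg _
  have hDlt : sSup D < 1 := lt_of_le_of_lt (Real.sSup_le hbound hf0) hstrict
  refine ⟨?_, hop⟩
  rw [hop]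
  exact lt_of_le_of_lt hsig_le hDlt
end
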